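/- Let B and D be random vectors and W the Moore–Penrose inverse of Var(D). Then the matrix Var(B) − Cov(B,D)·W·Cov(D,B) (the adjusted variance Var_D(B)) is positive semidefinite; in particular, adjustment by D never increases uncertainty about any linear combination of the components of B. -/

import Mathlib

open MeasureTheory Matrix

variable {Ω : Type*}

/-- The covariance matrix of two random vectors `B` (dimension `m`) and `D` (dimension `n`):
the `(i,j)` entry is `E[Bᵢ·Dⱼ] − E[Bᵢ]·E[Dⱼ]`. -/
noncomputable def cov [MeasurableSpace Ω] (μ : Measure Ω) {m n : ℕ}
    (B : Fin m → Ω → ℝ) (D : Fin n → Ω → ℝ) : Matrix (Fin m) (Fin n) ℝ :=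
  Matrix.of fun i j =>
    (∫ ω, B i ω * D j ω ∂μ) - (∫ ω, B i ω ∂μ) * (∫ ω, D j ω ∂μ)

/-- `W` is a Moore–Penrose inverse of `V`. -/
def IsMoorePenrose {m n : ℕ} (V : Matrix (Fin m) (Fin n) ℝ)
    (W : Matrix (Fin n) (Fin m) ℝ) : Prop :=
  V * W * V = V ∧ W * V * W = W ∧ (V * W)ᵀ = V * W ∧ (W * V)ᵀ = W * V

/-- The adjusted expectation `E_D(B)` (computed with the matrix `W`, intended to be the
Moore–Penrose inverse of `Var(D)`): the `i`-th component is
`E[Bᵢ] + Σ_j (Cov(B,D)·W)_{ij}·(Dⱼ − E[Dⱼ])`. -/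
noncomputable def adjExp [MeasurableSpace Ω] (μ : Measure Ω) {m n : ℕ}
    (B : Fin m → Ω → ℝ) (D : Fin n → Ω → ℝ)
    (W : Matrix (Fin n) (Fin n) ℝ) : Fin m → Ω → ℝ :=
  fun i ω => (∫ ω', B i ω' ∂μ) + ∑ j, (cov μ B D * W) i j * (D j ω - ∫ ω', D j ω' ∂μ)

/-- The adjusted covariance `Cov_D(B,C) = Cov(B − E_D(B), C − E_D(C))`. -/
noncomputable def adjCov [MeasurableSpace Ω] (μ : Measure Ω) {m p n : ℕ}
    (B : Fin m → Ω → ℝ) (C : Fin p → Ω → ℝ) (D : Fin n → Ω → ℝ)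
    (W : Matrix (Fin n) (Fin n) ℝ) : Matrix (Fin m) (Fin p) ℝ :=
  cov μ (fun i ω => B i ω - adjExp μ B D W i ω) (fun j ω => C j ω - adjExp μ C D W j ω)

section Aux

/-- Uniqueness of the Moore–Penrose inverse. -/
lemma mp_unique {n : ℕ} {V W1 W2 : Matrix (Fin n) (Fin n) ℝ}
    (h1 : V * W1 * V = V ∧ W1 * V * W1 = W1 ∧ (V * W1)ᵀ = V * W1 ∧ (W1 * V)ᵀ = W1 * V)
    (h2 : V * W2 * V = V ∧ W2 * V * W2 = W2 ∧ (V * W2)ᵀ = V * W2 ∧ (W2 * V)ᵀ = W2 * V) :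
    W1 = W2 := by
  obtain ⟨a1, b1, c1, d1⟩ := h1
  obtain ⟨a2, b2, c2, d2⟩ := h2
  have hVW : V * W1 = V * W2 := by
    calc V * W1 = (V * W1)ᵀ := c1.symm
    _ = (V * W2 * V * W1)ᵀ := by rw [a2]
    _ = (V * W1)ᵀ * (V * W2)ᵀ := by
        rw [show V * W2 * V * W1 = (V * W2) * (V * W1) by rw [Matrix.mul_assoc],
          Matrix.transpose_mul]
    _ = (V * W1) * (V * W2) := by rw [c1, c2]
    _ = (V * W1 * V) * W2 := by simp only [Matrix.mul_assoc]
    _ = V * W2 := by rw [a1]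
  have hWV : W1 * V = W2 * V := by
    calc W1 * V = (W1 * V)ᵀ := d1.symm
    _ = (W1 * (V * W2 * V))ᵀ := by rw [a2]
    _ = (W2 * V)ᵀ * (W1 * V)ᵀ := by
        rw [← Matrix.transpose_mul]
        rw [Matrix.mul_assoc, Matrix.mul_assoc]
    _ = (W2 * V) * (W1 * V) := by rw [d1, d2]
    _ = W2 * (V * W1 * V) := by rw [Matrix.mul_assoc, Matrix.mul_assoc]
    _ = W2 * V := by rw [a1]
  calc W1 = W1 * V * W1 := b1.symm
  _ = W1 * (V * W2) := by rw [Matrix.mul_assoc, hVW]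
  _ = (W2 * V) * W2 := by rw [← Matrix.mul_assoc, hWV]
  _ = W2 := b2

variable [MeasurableSpace Ω] {μ : Measure Ω} [IsProbabilityMeasure μ]

lemma int_mul {f g : Ω → ℝ} (hf : MemLp f 2 μ) (hg : MemLp g 2 μ) :
    Integrable (fun ω => f ω * g ω) μ := by
  have : MemLp (fun ω => f ω * g ω) 1 μ := by
    have := hg.smul (φ := f) hf (r := 1) (hpqr := ⟨by simp [one_div, ENNReal.inv_two_add_inv_two]⟩)
    exact this
  exact this.integrable le_rfl

lemma int_one {f : Ω → ℝ} (hf : MemLp f 2 μ) : Integrable f μ :=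
  hf.integrable (by norm_num)

lemma var_nonneg {f : Ω → ℝ} (hf : MemLp f 2 μ) :
    0 ≤ (∫ ω, f ω * f ω ∂μ) - (∫ ω, f ω ∂μ) * (∫ ω, f ω ∂μ) := by
  set c := ∫ ω, f ω ∂μ with hc
  have h2 : Integrable (fun ω => f ω * f ω) μ := int_mul hf hf
  have h1 : Integrable f μ := int_one hf
  have key : (∫ ω, (f ω - c) * (f ω - c) ∂μ)
      = (∫ ω, f ω * f ω ∂μ) - c * c := by
    have : ∀ ω, (f ω - c) * (f ω - c) = f ω * f ω - (2*c) * f ω + c * c := fun ω => by ring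
    simp_rw [this]
    have ia : Integrable (fun ω => f ω * f ω - 2 * c * f ω) μ := h2.sub (h1.const_mul (2 * c))
    rw [integral_add ia (integrable_const (c * c)),
      integral_sub h2 (h1.const_mul (2 * c)), integral_const_mul, integral_const]
    simp [← hc]
    ring
  have : 0 ≤ ∫ ω, (f ω - c) * (f ω - c) ∂μ :=
    integral_nonneg fun ω => mul_self_nonneg _
  linarith [this, key]

lemma cov_dot {m n : ℕ}
    (B : Fin m → Ω → ℝ) (D : Fin n → Ω → ℝ)
    (hB : ∀ i, MemLp (B i) 2 μ) (hD : ∀ i, MemLp (D i) 2 μ)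
    (a : Fin m → ℝ) (b : Fin n → ℝ) :
    (∫ ω, (∑ i, a i * B i ω) * (∑ j, b j * D j ω) ∂μ)
      - (∫ ω, ∑ i, a i * B i ω ∂μ) * (∫ ω, ∑ j, b j * D j ω ∂μ)
    = a ⬝ᵥ (cov μ B D *ᵥ b) := by
  have hprod : (∫ ω, (∑ i, a i * B i ω) * (∑ j, b j * D j ω) ∂μ)
      = ∑ i, ∑ j, a i * b j * ∫ ω, B i ω * D j ω ∂μ := by
    have : ∀ ω, (∑ i, a i * B i ω) * (∑ j, b j * D j ω)
        = ∑ i, ∑ j, a i * b j * (B i ω * D j ω) := by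
      intro ω
      rw [Finset.sum_mul_sum]
      exact Finset.sum_congr rfl fun i _ => Finset.sum_congr rfl fun j _ => by ring
    simp_rw [this]
    rw [integral_finset_sum _ fun i _ => integrable_finset_sum _
      fun j _ => ((int_mul (hB i) (hD j))).const_mul _]
    refine Finset.sum_congr rfl fun i _ => ?_
    rw [integral_finset_sum _ fun j _ => (int_mul (hB i) (hD j)).const_mul _]
    exact Finset.sum_congr rfl fun j _ => integral_const_mul _ _
  have hBint : (∫ ω, ∑ i, a i * B i ω ∂μ) = ∑ i, a i * ∫ ω, B i ω ∂μ := by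
    rw [integral_finset_sum _ fun i _ => (int_one (hB i)).const_mul _]
    exact Finset.sum_congr rfl fun i _ => integral_const_mul _ _
  have hDint : (∫ ω, ∑ j, b j * D j ω ∂μ) = ∑ j, b j * ∫ ω, D j ω ∂μ := by
    rw [integral_finset_sum _ fun j _ => (int_one (hD j)).const_mul _]
    exact Finset.sum_congr rfl fun j _ => integral_const_mul _ _
  rw [hprod, hBint, hDint, Finset.sum_mul_sum]
  simp only [dotProduct, mulVec, cov, Matrix.of_apply, Finset.mul_sum, mul_sub]
  rw [← Finset.sum_sub_distrib]
  refine Finset.sum_congr rfl fun i _ => ?_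
  rw [← Finset.sum_sub_distrib]
  exact Finset.sum_congr rfl fun j _ => by ring

end Aux

/-- the adjusted variance `Var_D(B) = Var(B) − Cov(B,D)·W·Cov(D,B)` is
positive semidefinite, where `W` is the Moore–Penrose inverse of `Var(D)`. -/
theorem adjVar_posSemidef [MeasurableSpace Ω] (μ : Measure Ω) [IsProbabilityMeasure μ]
    {m n : ℕ} (B : Fin m → Ω → ℝ) (D : Fin n → Ω → ℝ)
    (hB : ∀ i, Measurable (B i) ∧ MemLp (B i) 2 μ)
    (hD : ∀ i, Measurable (D i) ∧ MemLp (D i) 2 μ)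
    (W : Matrix (Fin n) (Fin n) ℝ) (hW : IsMoorePenrose (cov μ D D) W) :
    (cov μ B B - cov μ B D * W * cov μ D B).PosSemidef := by
  classical
  have hB2 : ∀ i, MemLp (B i) 2 μ := fun i => (hB i).2
  have hD2 : ∀ i, MemLp (D i) 2 μ := fun i => (hD i).2
  set V := cov μ D D with hV
  set C := cov μ B D with hC
  set Cd := cov μ D B with hCdd
  have hCdT : Cdᵀ = C := by
    ext i j
    simp only [hC, hCdd, cov, Matrix.transpose_apply, Matrix.of_apply, mul_comm]
  have hCT : Cᵀ = Cd := by rw [← hCdT, Matrix.transpose_transpose]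
  have hVT : Vᵀ = V := by
    ext i j
    simp only [hV, cov, Matrix.transpose_apply, Matrix.of_apply, mul_comm]
  obtain ⟨a1, b1, c1, d1⟩ := hW
  -- Wᵀ is also a Moore–Penrose inverse of V, hence W is symmetric
  have hWT : Wᵀ = W := by
    refine mp_unique ?_ ⟨a1, b1, c1, d1⟩
    refine ⟨?_, ?_, ?_, ?_⟩
    · have h := congrArg Matrix.transpose a1
      rwa [Matrix.transpose_mul, Matrix.transpose_mul, hVT, ← Matrix.mul_assoc] at h
    · have h := congrArg Matrix.transpose b1
      rwa [Matrix.transpose_mul, Matrix.transpose_mul, hVT, ← Matrix.mul_assoc] at h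
    · have e : V * Wᵀ = W * V := by rw [← d1, Matrix.transpose_mul, hVT]
      rw [e]; exact d1
    · have e : Wᵀ * V = V * W := by rw [← c1, Matrix.transpose_mul, hVT]
      rw [e]; exact c1
  have hBBT : (cov μ B B)ᵀ = cov μ B B := by
    ext i j
    simp only [cov, Matrix.transpose_apply, Matrix.of_apply, mul_comm]
  have hsym : (cov μ B B - C * W * Cd)ᵀ = cov μ B B - C * W * Cd := by
    rw [Matrix.transpose_sub, hBBT, Matrix.transpose_mul, Matrix.transpose_mul,
      hWT, hCdT, hCT, Matrix.mul_assoc]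
  rw [Matrix.posSemidef_iff_dotProduct_mulVec]
  constructor
  · show (cov μ B B - C * W * Cd)ᴴ = _
    have : (cov μ B B - C * W * Cd)ᴴ = (cov μ B B - C * W * Cd)ᵀ := by
      ext i j
      simp [Matrix.conjTranspose_apply]
    rw [this, hsym]
  · intro x
    set y : Fin n → ℝ := (W * Cd) *ᵥ x with hy
    set S : Ω → ℝ := fun ω => ∑ i, x i * B i ω with hS
    set T : Ω → ℝ := fun ω => ∑ j, y j * D j ω with hT
    have hSm : MemLp S 2 μ := by
      rw [hS]
      exact memLp_finset_sum _ fun i _ => (hB2 i).const_mul _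
    have hTm : MemLp T 2 μ := by
      rw [hT]
      exact memLp_finset_sum _ fun j _ => (hD2 j).const_mul _
    have hfm : MemLp (fun ω => S ω - T ω) 2 μ := hSm.sub hTm
    have h0 := var_nonneg hfm
    have hintf : (∫ ω, S ω - T ω ∂μ) = (∫ ω, S ω ∂μ) - (∫ ω, T ω ∂μ) :=
      integral_sub (int_one hSm) (int_one hTm)
    have hintff : (∫ ω, (S ω - T ω) * (S ω - T ω) ∂μ)
        = (∫ ω, S ω * S ω ∂μ) - 2 * (∫ ω, S ω * T ω ∂μ) + (∫ ω, T ω * T ω ∂μ) := by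
      have hptw : ∀ ω, (S ω - T ω) * (S ω - T ω)
          = S ω * S ω - 2 * (S ω * T ω) + T ω * T ω := fun ω => by ring
      simp_rw [hptw]
      have iSS := int_mul hSm hSm
      have iST := int_mul hSm hTm
      have iTT := int_mul hTm hTm
      have ia : Integrable (fun ω => S ω * S ω - 2 * (S ω * T ω)) μ :=
        iSS.sub (iST.const_mul 2)
      rw [integral_add ia iTT, integral_sub iSS (iST.const_mul 2), integral_const_mul]
    have key : 0 ≤ ((∫ ω, S ω * S ω ∂μ) - (∫ ω, S ω ∂μ) * (∫ ω, S ω ∂μ))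
        - 2 * ((∫ ω, S ω * T ω ∂μ) - (∫ ω, S ω ∂μ) * (∫ ω, T ω ∂μ))
        + ((∫ ω, T ω * T ω ∂μ) - (∫ ω, T ω ∂μ) * (∫ ω, T ω ∂μ)) := by
      rw [hintff, hintf] at h0
      nlinarith [h0]
    have e1 := cov_dot B B hB2 hB2 x x
    have e2 := cov_dot B D hB2 hD2 x y
    have e3 := cov_dot D D hD2 hD2 y y
    rw [hS, hT] at key
    rw [e1, e2, e3, ← hC, ← hV] at key
    -- matrix algebra
    have q2 : x ⬝ᵥ (C *ᵥ y) = x ⬝ᵥ ((C * W * Cd) *ᵥ x) := by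
      rw [hy, Matrix.mulVec_mulVec, Matrix.mul_assoc]
    have hdots : ∀ (A : Matrix (Fin n) (Fin m) ℝ) (u : Fin n → ℝ),
        (A *ᵥ x) ⬝ᵥ u = x ⬝ᵥ (Aᵀ *ᵥ u) := by
      intro A u
      rw [dotProduct_comm, dotProduct_mulVec, dotProduct_comm]
      congr 1
      rw [← Matrix.vecMul_transpose, Matrix.transpose_transpose]
    have hmat : (W * Cd)ᵀ * (V * (W * Cd)) = C * W * Cd := by
      rw [Matrix.transpose_mul, hWT, hCdT]
      calc C * W * (V * (W * Cd)) = C * (W * V * W) * Cd := by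
            simp only [Matrix.mul_assoc]
      _ = C * W * Cd := by rw [b1]
    have q3 : y ⬝ᵥ (V *ᵥ y) = x ⬝ᵥ ((C * W * Cd) *ᵥ x) := by
      rw [hy, Matrix.mulVec_mulVec, hdots, Matrix.mulVec_mulVec, hmat]
    rw [q2, q3] at key
    have : star x = x := by
      funext i; simp
    rw [this, Matrix.sub_mulVec, dotProduct_sub]
    linarith [key]
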